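/- The round spherical metric computed as the pullback of the Euclidean metric under the spherical coordinate map is diagonal: the (i,j) entry of (Df)ᵀ(Df) equals δ_{ij} ∏_{k<i} sin²(θ_k), where f : ℝ^D → ℝ^{D+1} is given by f(θ)_d = cos(θ_d)∏_{i<d} sin(θ_i) for d ≤ D and f(θ)_{D+1} = ∏_{i=1}^D sin(θ_i). -/

import Mathlib

open Matrix

/-- The spherical coordinate embedding `f : ℝ^D → ℝ^{D+1}`,
`f(θ)_d = cos(θ_d) ∏_{i<d} sin(θ_i)` for `d ≤ D` and `f(θ)_{D+1} = ∏_{i=1}^D sin(θ_i)`. -/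
noncomputable def sphCoord (D : ℕ) (θ : Fin D → ℝ) (d : Fin (D + 1)) : ℝ :=
  (if h : (d : ℕ) < D then Real.cos (θ ⟨d, h⟩) else 1)
    * ∏ i ∈ Finset.univ.filter (fun i : Fin D => (i : ℕ) < (d : ℕ)), Real.sin (θ i)

/-- The partial derivative pattern of spherical coordinates, ℕ-indexed. -/
noncomputable def sphQ (c s : ℕ → ℝ) (D d j : ℕ) : ℝ :=
  if j < d then (if d < D then c d else 1) * c j * ∏ k ∈ (Finset.range d).erase j, s k
  else if j = d then -(s j) * ∏ k ∈ Finset.range d, s k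
  else 0

lemma sphQ_eq_of_lt (c s : ℕ → ℝ) {D d : ℕ} (hd : d < D) (x : ℕ) :
    sphQ c s (D + 1) d x = sphQ c s D d x := by
  unfold sphQ
  by_cases h1 : x < d
  · rw [if_pos h1, if_pos h1, if_pos (by omega), if_pos hd]
  · rw [if_neg h1, if_neg h1]

lemma sphQ_key (c s : ℕ → ℝ) (h : ∀ k, c k ^ 2 + s k ^ 2 = 1) :
    ∀ D, ∀ i < D, ∀ j < D,
      ∑ d ∈ Finset.range (D + 1), sphQ c s D d i * sphQ c s D d j
        = if i = j then ∏ k ∈ Finset.range i, s k ^ 2 else 0 := by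
  intro D
  induction D with
  | zero => intro i hi; omega
  | succ D IH =>
    have hQtop : ∀ x, x < D + 1 →
        sphQ c s (D + 1) (D + 1) x = c x * ∏ k ∈ (Finset.range (D + 1)).erase x, s k := by
      intro x hx
      unfold sphQ
      rw [if_pos hx, if_neg (lt_irrefl _), one_mul]
    have hQD : ∀ x, x < D →
        sphQ c s (D + 1) D x = c D * c x * ∏ k ∈ (Finset.range D).erase x, s k := by
      intro x hx
      unfold sphQ
      rw [if_pos hx, if_pos (by omega)]
    have hQDD : sphQ c s (D + 1) D D = -(s D) * ∏ k ∈ Finset.range D, s k := by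
      unfold sphQ
      rw [if_neg (lt_irrefl _), if_pos rfl]
    have herase : ∀ x, x < D →
        (Finset.range (D + 1)).erase x = insert D ((Finset.range D).erase x) := by
      intro x hx
      rw [Finset.range_add_one, Finset.erase_insert_of_ne (by omega)]
    have heraseD : (Finset.range (D + 1)).erase D = Finset.range D := by
      rw [Finset.range_add_one, Finset.erase_insert (by simp)]
    intro i hi j hj
    rw [Finset.sum_range_succ, Finset.sum_range_succ]
    by_cases hiD : i = D
    · rw [hiD]
      have hzero : ∀ d ∈ Finset.range D, sphQ c s (D + 1) d D * sphQ c s (D + 1) d j = 0 := by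
        intro d hd
        rw [Finset.mem_range] at hd
        have : sphQ c s (D + 1) d D = 0 := by
          unfold sphQ
          rw [if_neg (by omega), if_neg (by omega)]
        rw [this, zero_mul]
      rw [Finset.sum_eq_zero hzero, zero_add]
      by_cases hjD : j = D
      · rw [hjD, if_pos rfl, hQDD, hQtop _ (by omega), heraseD, Finset.prod_pow]
        linear_combination ((∏ k ∈ Finset.range D, s k) ^ 2) * h D
      · have hj' : j < D := by omega
        rw [if_neg (by omega), hQDD, hQtop _ (by omega), hQtop _ (by omega),
          hQD _ hj', heraseD, herase _ hj',
          Finset.prod_insert (by simp)]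
        ring
    · by_cases hjD : j = D
      · rw [hjD]
        have hi' : i < D := by omega
        have hzero : ∀ d ∈ Finset.range D, sphQ c s (D + 1) d i * sphQ c s (D + 1) d D = 0 := by
          intro d hd
          rw [Finset.mem_range] at hd
          have : sphQ c s (D + 1) d D = 0 := by
            unfold sphQ
            rw [if_neg (by omega), if_neg (by omega)]
          rw [this, mul_zero]
        rw [Finset.sum_eq_zero hzero, zero_add, if_neg (by omega), hQDD,
          hQtop _ (by omega), hQtop _ (by omega), hQD _ hi', heraseD, herase _ hi',
          Finset.prod_insert (by simp)]
        ring
      · have hi' : i < D := by omega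
        have hj' : j < D := by omega
        have hsum : ∑ d ∈ Finset.range D, sphQ c s (D + 1) d i * sphQ c s (D + 1) d j
            = ∑ d ∈ Finset.range D, sphQ c s D d i * sphQ c s D d j := by
          apply Finset.sum_congr rfl
          intro d hd
          rw [Finset.mem_range] at hd
          rw [sphQ_eq_of_lt c s hd, sphQ_eq_of_lt c s hd]
        have hQDold : ∀ x, x < D →
            sphQ c s D D x = c x * ∏ k ∈ (Finset.range D).erase x, s k := by
          intro x hx
          unfold sphQ
          rw [if_pos hx, if_neg (lt_irrefl _), one_mul]
        have hcomb : sphQ c s (D + 1) D i * sphQ c s (D + 1) D j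
              + sphQ c s (D + 1) (D + 1) i * sphQ c s (D + 1) (D + 1) j
            = sphQ c s D D i * sphQ c s D D j := by
          rw [hQD _ hi', hQD _ hj', hQtop _ (by omega), hQtop _ (by omega),
            hQDold _ hi', hQDold _ hj', herase _ hi', herase _ hj',
            Finset.prod_insert (by simp), Finset.prod_insert (by simp)]
          linear_combination ((c i * ∏ k ∈ (Finset.range D).erase i, s k)
            * (c j * ∏ k ∈ (Finset.range D).erase j, s k)) * h D
        rw [hsum, add_assoc, hcomb, ← Finset.sum_range_succ]
        exact IH i hi' j hj'

/-- Extend `θ : Fin D → ℝ` to ℕ by zero. -/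
noncomputable def sphExt (D : ℕ) (θ : Fin D → ℝ) (k : ℕ) : ℝ :=
  if h : k < D then θ ⟨k, h⟩ else 0

@[simp] lemma sphExt_val (D : ℕ) (θ : Fin D → ℝ) (i : Fin D) : sphExt D θ ↑i = θ i := by
  simp [sphExt, i.isLt]

lemma map_filter_lt (D n : ℕ) (hn : n ≤ D) :
    (Finset.univ.filter (fun i : Fin D => (i : ℕ) < n)).map Fin.valEmbedding
      = Finset.range n := by
  ext k
  simp only [Finset.mem_map, Finset.mem_filter, Finset.mem_univ, true_and,
    Fin.valEmbedding_apply, Finset.mem_range]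
  constructor
  · rintro ⟨i, hi, rfl⟩; exact hi
  · intro hk; exact ⟨⟨k, by omega⟩, hk, rfl⟩

lemma prod_filter_lt (D n : ℕ) (hn : n ≤ D) (θ : Fin D → ℝ) (F : ℝ → ℝ) :
    ∏ i ∈ Finset.univ.filter (fun i : Fin D => (i : ℕ) < n), F (θ i)
      = ∏ k ∈ Finset.range n, F (sphExt D θ k) := by
  rw [← map_filter_lt D n hn, Finset.prod_map]
  exact Finset.prod_congr rfl (fun i _ => by simp)

lemma prod_filter_lt_erase (D n : ℕ) (hn : n ≤ D) (θ : Fin D → ℝ) (j : Fin D) (F : ℝ → ℝ) :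
    ∏ i ∈ (Finset.univ.filter (fun i : Fin D => (i : ℕ) < n)).erase j, F (θ i)
      = ∏ k ∈ (Finset.range n).erase ↑j, F (sphExt D θ k) := by
  rw [← map_filter_lt D n hn, show ((j : ℕ)) = Fin.valEmbedding j from rfl,
    ← Finset.map_erase, Finset.prod_map]
  exact Finset.prod_congr rfl (fun i _ => by simp)

lemma fderiv_sphCoord (D : ℕ) (θ : Fin D → ℝ) (d : Fin (D + 1)) (j : Fin D) :
    fderiv ℝ (fun x => sphCoord D x d) θ (Pi.single j 1)
      = sphQ (fun k => Real.cos (sphExt D θ k)) (fun k => Real.sin (sphExt D θ k)) D ↑d ↑j := by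
  have hdD : (d : ℕ) ≤ D := by omega
  set S := Finset.univ.filter (fun i : Fin D => (i : ℕ) < (d : ℕ)) with hS
  have hP : HasFDerivAt (fun x : Fin D → ℝ => ∏ i ∈ S, Real.sin (x i))
      (∑ i ∈ S, (∏ k ∈ S.erase i, Real.sin (θ k)) •
        ((Real.cos (θ i)) • ContinuousLinearMap.proj (R := ℝ) (φ := fun _ : Fin D => ℝ) i)) θ :=
    HasFDerivAt.finset_prod (fun i _ =>
      (Real.hasDerivAt_sin (θ i)).comp_hasFDerivAt (f := fun x : Fin D → ℝ => x i) θ (hasFDerivAt_apply i θ))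
  have hjS : (j ∈ S) ↔ (j : ℕ) < (d : ℕ) := by simp [hS]
  have hsingle : ∀ i : Fin D, (Pi.single j 1 : Fin D → ℝ) i = if i = j then 1 else 0 := by
    intro i; rw [Pi.single_apply]
  have hsum : ∀ v : Fin D → ℝ, (∑ i ∈ S, (∏ k ∈ S.erase i, Real.sin (θ k)) •
        ((Real.cos (θ i)) • ContinuousLinearMap.proj (R := ℝ) (φ := fun _ : Fin D => ℝ) i))
        (Pi.single j 1)
      = if (j : ℕ) < (d : ℕ) then (∏ k ∈ S.erase j, Real.sin (θ k)) * Real.cos (θ j) else 0 := by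
    intro v
    rw [ContinuousLinearMap.sum_apply]
    simp only [ContinuousLinearMap.smul_apply, ContinuousLinearMap.proj_apply, hsingle,
      smul_eq_mul, mul_ite, mul_one, mul_zero]
    rw [Finset.sum_ite_eq' S j (fun i => (∏ k ∈ S.erase i, Real.sin (θ k)) * Real.cos (θ i))]
    by_cases hj : (j : ℕ) < (d : ℕ)
    · rw [if_pos (hjS.mpr hj), if_pos hj]
    · rw [if_neg (fun hh => hj (hjS.mp hh)), if_neg hj]
  by_cases hd : (d : ℕ) < D
  · have hc : HasFDerivAt (fun x : Fin D → ℝ => Real.cos (x ⟨d, hd⟩))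
        ((-Real.sin (θ ⟨d, hd⟩)) • ContinuousLinearMap.proj (R := ℝ) (φ := fun _ : Fin D => ℝ)
          ⟨d, hd⟩) θ :=
      (Real.hasDerivAt_cos (θ ⟨d, hd⟩)).comp_hasFDerivAt (f := fun x : Fin D → ℝ => x ⟨d, hd⟩) θ
        (hasFDerivAt_apply ⟨d, hd⟩ θ)
    have hf : HasFDerivAt (fun x => sphCoord D x d)
        (Real.cos (θ ⟨d, hd⟩) • (∑ i ∈ S, (∏ k ∈ S.erase i, Real.sin (θ k)) •
            ((Real.cos (θ i)) • ContinuousLinearMap.proj (R := ℝ) (φ := fun _ : Fin D => ℝ) i))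
          + (∏ i ∈ S, Real.sin (θ i)) •
            ((-Real.sin (θ ⟨d, hd⟩)) • ContinuousLinearMap.proj (R := ℝ)
              (φ := fun _ : Fin D => ℝ) ⟨d, hd⟩)) θ := by
      simp only [sphCoord, dif_pos hd, ← hS]
      exact hc.mul hP
    rw [hf.fderiv]
    rw [ContinuousLinearMap.add_apply, ContinuousLinearMap.smul_apply,
      ContinuousLinearMap.smul_apply, ContinuousLinearMap.smul_apply,
      ContinuousLinearMap.proj_apply, hsum (Pi.single j 1), hsingle]
    have hext_d : sphExt D θ ↑d = θ ⟨d, hd⟩ := by simp [sphExt, hd]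
    rcases lt_trichotomy ((j : ℕ)) ((d : ℕ)) with hlt | heq | hgt
    · have hne : (⟨(d : ℕ), hd⟩ : Fin D) ≠ j := by
        intro hh; apply absurd (congrArg Fin.val hh); simp; omega
      rw [if_pos hlt, if_neg hne]
      unfold sphQ
      rw [if_pos hlt, if_pos hd]
      rw [hS, prod_filter_lt_erase D ↑d hdD θ j Real.sin]
      simp only [hext_d, sphExt_val, smul_eq_mul]
      ring
    · have heq' : (⟨(d : ℕ), hd⟩ : Fin D) = j := by
        apply Fin.ext; simp [heq]
      rw [if_neg (by omega), if_pos heq']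
      unfold sphQ
      rw [if_neg (by omega), if_pos heq]
      rw [hS, prod_filter_lt D ↑d hdD θ Real.sin]
      simp only [sphExt_val, smul_eq_mul, heq', mul_one, mul_zero]
      ring
    · have hne : (⟨(d : ℕ), hd⟩ : Fin D) ≠ j := by
        intro hh; apply absurd (congrArg Fin.val hh); simp; omega
      rw [if_neg (by omega), if_neg hne]
      unfold sphQ
      rw [if_neg (by omega), if_neg (by omega)]
      simp
  · have hf : HasFDerivAt (fun x => sphCoord D x d)
        (∑ i ∈ S, (∏ k ∈ S.erase i, Real.sin (θ k)) •
          ((Real.cos (θ i)) • ContinuousLinearMap.proj (R := ℝ) (φ := fun _ : Fin D => ℝ) i))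
        θ := by
      simp only [sphCoord, dif_neg hd, one_mul, ← hS]
      exact hP
    rw [hf.fderiv, hsum (Pi.single j 1)]
    have hjd : (j : ℕ) < (d : ℕ) := by omega
    rw [if_pos hjd]
    unfold sphQ
    rw [if_pos hjd, if_neg (by omega), one_mul]
    rw [hS, prod_filter_lt_erase D ↑d hdD θ j Real.sin]
    simp only [sphExt_val]
    ring

/-- The round spherical metric, i.e. the pullback `(Df)ᵀ(Df)` of the Euclidean metric
under the spherical coordinate map, is the diagonal matrix
`diag(1, sin²θ_1, ..., ∏_{d<D} sin²θ_d)`. -/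
theorem stmt_15 (D : ℕ) (θ : Fin D → ℝ) :
    (Matrix.of fun (d : Fin (D + 1)) (j : Fin D) =>
        fderiv ℝ (fun x => sphCoord D x d) θ (Pi.single j 1))ᵀ
      * (Matrix.of fun (d : Fin (D + 1)) (j : Fin D) =>
        fderiv ℝ (fun x => sphCoord D x d) θ (Pi.single j 1))
      = Matrix.diagonal (fun i : Fin D =>
          ∏ k ∈ Finset.univ.filter (fun k : Fin D => (k : ℕ) < (i : ℕ)),
            Real.sin (θ k) ^ 2) := by
  ext i j
  rw [Matrix.mul_apply]
  simp only [Matrix.transpose_apply, Matrix.of_apply, fderiv_sphCoord]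
  rw [Fin.sum_univ_eq_sum_range (fun k =>
    sphQ (fun k => Real.cos (sphExt D θ k)) (fun k => Real.sin (sphExt D θ k)) D k ↑i
      * sphQ (fun k => Real.cos (sphExt D θ k)) (fun k => Real.sin (sphExt D θ k)) D k ↑j) (D + 1)]
  rw [sphQ_key _ _ (fun k => Real.cos_sq_add_sin_sq _) D ↑i i.isLt ↑j j.isLt,
    Matrix.diagonal_apply]
  by_cases hij : i = j
  · subst hij
    rw [if_pos rfl, if_pos rfl]
    exact (prod_filter_lt D ↑i (le_of_lt i.isLt) θ (fun x => Real.sin x ^ 2)).symm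
  · rw [if_neg (fun hh => hij (Fin.ext hh)), if_neg hij]
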